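/- Let q ∈ (0,1) and μ > 0, and let ρ_q(r) = (q − 1/2) r + (1/2)|r| be the check function. Then its Moreau envelope satisfies M_{μρ_q}(r) = inf_ν [ ρ_q(ν) + (1/(2μ))(r − ν)² ] = q r − (μ/2)q² if r ≥ qμ; = r²/(2μ) if −(1−q)μ < r < qμ; = −(1−q) r − (μ/2)(1−q)² if r ≤ −(1−q)μ. -/

import Mathlib

/-- The Moreau envelope of the check function `ρ_q(r) = (q − 1/2)r + (1/2)|r|`:
for `q ∈ (0,1)` and `μ > 0`,
`M_{μρ_q}(r) = qr − (μ/2)q²` if `r ≥ qμ`, `r²/(2μ)` if `−(1−q)μ < r < qμ`,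
and `−(1−q)r − (μ/2)(1−q)²` if `r ≤ −(1−q)μ`. -/
theorem moreau_envelope_check_function (q μ r : ℝ)
    (hq0 : 0 < q) (hq1 : q < 1) (hμ : 0 < μ) :
    (⨅ ν : ℝ, ((q - 1 / 2) * ν + (1 / 2) * |ν|) + 1 / (2 * μ) * (r - ν) ^ 2) =
      if r ≥ q * μ then q * r - μ / 2 * q ^ 2
      else if r ≤ -((1 - q) * μ) then -((1 - q) * r) - μ / 2 * (1 - q) ^ 2
      else r ^ 2 / (2 * μ) := by
  have hμ2 : (0:ℝ) < 2 * μ := by linarith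
  set f : ℝ → ℝ := fun ν => ((q - 1 / 2) * ν + (1 / 2) * |ν|) + 1 / (2 * μ) * (r - ν) ^ 2 with hfdef
  split_ifs with h1 h2
  · -- r ≥ q μ
    have lb : ∀ ν, q * r - μ / 2 * q ^ 2 ≤ f ν := by
      intro ν
      rcases le_or_gt 0 ν with hν | hν
      · have key : f ν - (q * r - μ / 2 * q ^ 2) = (ν - (r - q * μ))^2 / (2 * μ) := by
          simp only [hfdef, abs_of_nonneg hν]; field_simp; ring
        have : (0:ℝ) ≤ (ν - (r - q * μ))^2 / (2 * μ) := by positivity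
        linarith
      · have key : f ν - (q * r - μ / 2 * q ^ 2) = (ν - (r - q * μ))^2 / (2 * μ) + (-ν) := by
          simp only [hfdef, abs_of_neg hν]; field_simp; ring
        have : (0:ℝ) ≤ (ν - (r - q * μ))^2 / (2 * μ) := by positivity
        linarith
    apply le_antisymm
    · have hb : BddBelow (Set.range f) := ⟨_, Set.forall_mem_range.mpr lb⟩
      calc (⨅ ν, f ν) ≤ f (r - q * μ) := ciInf_le hb _
        _ = q * r - μ / 2 * q ^ 2 := by
            simp only [hfdef, abs_of_nonneg (by nlinarith : (0:ℝ) ≤ r - q * μ)]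
            field_simp; ring
    · exact le_ciInf lb
  · -- r ≤ -(1-q) μ
    have lb : ∀ ν, -((1 - q) * r) - μ / 2 * (1 - q) ^ 2 ≤ f ν := by
      intro ν
      rcases le_or_gt 0 ν with hν | hν
      · have key : f ν - (-((1 - q) * r) - μ / 2 * (1 - q) ^ 2) =
            (ν - (r + (1 - q) * μ))^2 / (2 * μ) + ν := by
          simp only [hfdef, abs_of_nonneg hν]; field_simp; ring
        have : (0:ℝ) ≤ (ν - (r + (1 - q) * μ))^2 / (2 * μ) := by positivity
        linarith
      · have key : f ν - (-((1 - q) * r) - μ / 2 * (1 - q) ^ 2) =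
            (ν - (r + (1 - q) * μ))^2 / (2 * μ) := by
          simp only [hfdef, abs_of_neg hν]; field_simp; ring
        have : (0:ℝ) ≤ (ν - (r + (1 - q) * μ))^2 / (2 * μ) := by positivity
        linarith
    apply le_antisymm
    · have hb : BddBelow (Set.range f) := ⟨_, Set.forall_mem_range.mpr lb⟩
      calc (⨅ ν, f ν) ≤ f (r + (1 - q) * μ) := ciInf_le hb _
        _ = -((1 - q) * r) - μ / 2 * (1 - q) ^ 2 := by
            simp only [hfdef, abs_of_nonpos (by nlinarith : r + (1 - q) * μ ≤ 0)]
            field_simp; ring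
    · exact le_ciInf lb
  · -- middle
    push_neg at h1 h2
    have lb : ∀ ν, r ^ 2 / (2 * μ) ≤ f ν := by
      intro ν
      rcases le_or_gt 0 ν with hν | hν
      · have key : f ν - r ^ 2 / (2 * μ) = ν * (2 * q * μ + ν - 2 * r) / (2 * μ) := by
          simp only [hfdef, abs_of_nonneg hν]; field_simp; ring
        have h3 : (0:ℝ) ≤ ν * (2 * q * μ + ν - 2 * r) / (2 * μ) := by
          apply div_nonneg _ hμ2.le
          apply mul_nonneg hν; nlinarith
        linarith
      · have key : f ν - r ^ 2 / (2 * μ) = ν * (2 * (q - 1) * μ + ν - 2 * r) / (2 * μ) := by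
          simp only [hfdef, abs_of_neg hν]; field_simp; ring
        have h3 : (0:ℝ) ≤ ν * (2 * (q - 1) * μ + ν - 2 * r) / (2 * μ) := by
          apply div_nonneg _ hμ2.le
          nlinarith [mul_nonneg (neg_nonneg.mpr hν.le) (by nlinarith : (0:ℝ) ≤ -(2 * (q - 1) * μ + ν - 2 * r))]
        linarith
    apply le_antisymm
    · have hb : BddBelow (Set.range f) := ⟨_, Set.forall_mem_range.mpr lb⟩
      calc (⨅ ν, f ν) ≤ f 0 := ciInf_le hb _
        _ = r ^ 2 / (2 * μ) := by
            simp only [hfdef, abs_zero]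
            field_simp
            ring
    · exact le_ciInf lb
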